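/- Let (b₀,b₁,…) be a sequence of integers such that p⁽ⁿ⁾ does not tend to ∞ and q⁽ⁿ⁾ does not tend to ∞. Then the continued fraction [b₀,b₁,…] diverges, i.e., its sequence of convergents does not converge in ℝ∞. -/

import Mathlib

open Filter Topology OnePoint

/-- The Möbius map `z ↦ b - 1/z` on the one-point compactification `ℝ∞` of `ℝ`. -/
noncomputable def mob (b : ℤ) (z : OnePoint ℝ) : OnePoint ℝ :=
  Option.elim z ((b : ℝ) : OnePoint ℝ)
    (fun x => if x = 0 then (∞ : OnePoint ℝ) else (((b : ℝ) - 1 / x : ℝ) : OnePoint ℝ))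

/-- Value of a finite continued fraction `[b₀, …, b_m]`, i.e. `s₀(s₁(⋯ s_m(∞)))`. -/
noncomputable def cfVal : List ℤ → OnePoint ℝ
  | [] => ∞
  | b :: t => mob b (cfVal t)

/-- The `n`th convergent `v_n = S_n(∞)` of the continued fraction `[b₀, b₁, …]`. -/
noncomputable def cfConv (b : ℕ → ℤ) (n : ℕ) : OnePoint ℝ :=
  cfVal ((List.range (n + 1)).map b)

/-- `m` is a positive index at which the coefficient is `0`, `1` or `-1`. -/
def badIdx (b : ℕ → ℤ) (m : ℕ) : Prop :=
  1 ≤ m ∧ (b m = 0 ∨ b m = 1 ∨ b m = -1)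

instance (b : ℕ → ℤ) : DecidablePred (badIdx b) := fun m => by
  unfold badIdx; infer_instance

-- The singularization map `Φ` on integer sequences.
open Classical in
noncomputable def Phi (b : ℕ → ℤ) : ℕ → ℤ :=
  if h : ∃ m, badIdx b m then
    let m := Nat.find h
    if b m = 0 then
      fun k => if k + 1 < m then b k
        else if k = m - 1 then b (m - 1) + b (m + 1)
        else b (k + 2)
    else if b m = 1 then
      fun k => if k + 1 < m then b k
        else if k = m - 1 then b (m - 1) - 1
        else if k = m then b (m + 1) - 1
        else b (k + 1)
    else
      fun k => if k + 1 < m then b k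
        else if k = m - 1 then b (m - 1) + 1
        else if k = m then b (m + 1) + 1
        else b (k + 1)
  else b

-- `p(b) ∈ ℕ ∪ {∞}`: the least positive index at which `0`, `1` or `-1` occurs.
open Classical in
noncomputable def pIdx (b : ℕ → ℤ) : ℕ∞ :=
  if h : ∃ m, badIdx b m then (Nat.find h : ℕ∞) else ⊤

/-- `p⁽ⁿ⁾ → ∞` as `n → ∞`. -/
def PTendsToTop (b : ℕ → ℤ) : Prop :=
  ∀ N : ℕ, ∃ M : ℕ, ∀ n ≥ M, (N : ℕ∞) < pIdx (Phi^[n] b)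

/-- `p = liminf pⁿ`, as a natural number (junk value if the liminf is `∞`). -/
noncomputable def pLim (b : ℕ → ℤ) : ℕ :=
  (Filter.liminf (fun n => pIdx (Phi^[n] b)) Filter.atTop).toNat

/-- `q⁽ⁿ⁾ = |b⁽ⁿ⁾_{p-1}|`. -/
noncomputable def qSeq (b : ℕ → ℤ) (n : ℕ) : ℕ :=
  ((Phi^[n] b) (pLim b - 1)).natAbs

/-- Two continued fractions have the same tail. -/
def SameTail (b c : ℕ → ℤ) : Prop := ∃ r s : ℕ, ∀ k : ℕ, b (r + k) = c (s + k)

/-- `bstar` is the limit continued fraction: each coefficient of `Φⁿ(b)` stabilises on it. -/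
def EventuallyCoeff (b bstar : ℕ → ℤ) : Prop :=
  ∀ k : ℕ, ∃ N : ℕ, ∀ n ≥ N, Phi^[n] b k = bstar k

/-- The point of `ℝ∞` represented by the integer fraction `a/b` (`∞` when `b = 0`). -/
noncomputable def intPt (a b : ℤ) : OnePoint ℝ :=
  if b = 0 then ∞ else (((a : ℝ) / (b : ℝ)) : OnePoint ℝ)

/-- Adjacency in the Farey graph: `x = a/b`, `y = c/d` with `ad - bc = ±1`. -/
def FareyAdj (x y : OnePoint ℝ) : Prop :=
  ∃ a b c d : ℤ, x = intPt a b ∧ y = intPt c d ∧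
    (a * d - b * c = 1 ∨ a * d - b * c = -1)

/-- `x` is an extended rational, i.e. a member of `ℚ∞ = ℚ ∪ {∞} ⊆ ℝ∞`. -/
def IsExtRat (x : OnePoint ℝ) : Prop :=
  x = ∞ ∨ ∃ q : ℚ, x = ((q : ℝ) : OnePoint ℝ)

-- One step of the index-tracking sequence, for the current coefficient sequence `c`.
open Classical in
noncomputable def eStep (c : ℕ → ℤ) (e : ℕ) : Option ℕ :=
  if h : ∃ m, badIdx c m then
    let m := Nat.find h
    if c m = 0 then
      if e + 2 ≤ m then Option.some e
      else if e = m - 1 ∨ e = m then (none : Option ℕ)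
      else Option.some (e - 2)
    else
      if e + 2 ≤ m then Option.some e
      else if e = m - 1 then (none : Option ℕ)
      else Option.some (e - 1)
  else Option.some e

/-- The index-tracking sequence `e⁽⁰⁾(k), e⁽¹⁾(k), …` (`none` once it has terminated). -/
noncomputable def eSeq (b : ℕ → ℤ) (k : ℕ) : ℕ → Option ℕ
  | 0 => Option.some k
  | n + 1 => (eSeq b k n).bind (eStep (Phi^[n] b))

lemma mob_infty (a : ℤ) : mob a ∞ = ((a:ℝ) : OnePoint ℝ) := rfl
lemma mob_coe (a : ℤ) (x : ℝ) : mob a (x : OnePoint ℝ)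
    = if x = 0 then ∞ else (((a:ℝ) - 1/x : ℝ) : OnePoint ℝ) := rfl

/-- translation by an integer on `ℝ∞`, fixing `∞`. -/
noncomputable def addPt (t : ℤ) (z : OnePoint ℝ) : OnePoint ℝ :=
  Option.elim z ∞ (fun x => ((x + t : ℝ) : OnePoint ℝ))

lemma addPt_infty (t : ℤ) : addPt t ∞ = ∞ := rfl
lemma addPt_coe (t : ℤ) (x : ℝ) : addPt t (x : OnePoint ℝ) = ((x + t : ℝ) : OnePoint ℝ) := rfl

lemma addPt_mob (t c : ℤ) (z : OnePoint ℝ) : addPt t (mob c z) = mob (c + t) z := by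
  induction z using OnePoint.rec
  · rw [mob_infty, addPt_coe, mob_infty, OnePoint.coe_eq_coe]; push_cast; ring
  case coe x =>
    by_cases hx : x = 0
    · subst hx; rw [mob_coe, if_pos rfl, mob_coe, if_pos rfl, addPt_infty]
    · rw [mob_coe, if_neg hx, mob_coe, if_neg hx, addPt_coe, OnePoint.coe_eq_coe]
      push_cast; ring

lemma mob_mob_zero (a : ℤ) (z : OnePoint ℝ) : mob a (mob 0 z) = addPt a z := by
  induction z using OnePoint.rec
  · rw [mob_infty, Int.cast_zero, mob_coe, if_pos rfl, addPt_infty]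
  case coe x =>
    by_cases hx : x = 0
    · subst hx; rw [mob_coe, if_pos rfl, mob_infty, addPt_coe, OnePoint.coe_eq_coe]; ring
    · rw [mob_coe, if_neg hx, Int.cast_zero]
      have h1 : (0:ℝ) - 1/x ≠ 0 := by simpa using one_div_ne_zero hx
      rw [mob_coe, if_neg h1, addPt_coe, OnePoint.coe_eq_coe]
      rw [zero_sub, div_neg, sub_neg_eq_add, one_div_one_div]; ring

lemma mob_mob_one (a : ℤ) (z : OnePoint ℝ) : mob a (mob 1 z) = mob (a - 1) (addPt (-1) z) := by
  induction z using OnePoint.rec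
  · rw [mob_infty, Int.cast_one, mob_coe, if_neg one_ne_zero, addPt_infty, mob_infty,
      OnePoint.coe_eq_coe]
    push_cast; norm_num
  case coe x =>
    by_cases hx : x = 0
    · subst hx
      rw [mob_coe, if_pos rfl, mob_infty, addPt_coe, mob_coe, if_neg (by norm_num : (0:ℝ) + (-1:ℤ) ≠ 0),
        OnePoint.coe_eq_coe]
      push_cast; norm_num
    · rw [mob_coe, if_neg hx, Int.cast_one, addPt_coe]
      by_cases h1 : (1:ℝ) - 1/x = 0
      · have hx1 : x = 1 := by
          field_simp at h1; linarith
        have h2 : x + ((-1:ℤ):ℝ) = 0 := by rw [hx1]; push_cast; ring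
        rw [mob_coe, if_pos h1, mob_coe, if_pos h2]
      · have hx1 : x ≠ 1 := by intro h; subst h; simp at h1
        have h2 : x + ((-1:ℤ):ℝ) ≠ 0 := by push_cast; intro h; exact hx1 (by linarith)
        rw [mob_coe, if_neg h1, mob_coe, if_neg h2, OnePoint.coe_eq_coe]
        push_cast
        have h3 : x - 1 ≠ 0 := sub_ne_zero.mpr hx1
        have e : 1 - 1/x = (x-1)/x := by field_simp
        rw [show x + (-1:ℝ) = x - 1 from by ring, e, one_div_div]
        field_simp
        ring

lemma mob_mob_negone (a : ℤ) (z : OnePoint ℝ) :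
    mob a (mob (-1) z) = mob (a + 1) (addPt 1 z) := by
  induction z using OnePoint.rec
  · rw [mob_infty]
    have hne : ((-1:ℤ):ℝ) ≠ 0 := by norm_num
    rw [mob_coe, if_neg hne, addPt_infty, mob_infty, OnePoint.coe_eq_coe]
    push_cast; norm_num
  case coe x =>
    by_cases hx : x = 0
    · subst hx
      have h2 : (0:ℝ) + ((1:ℤ):ℝ) ≠ 0 := by norm_num
      rw [mob_coe, if_pos rfl, mob_infty, addPt_coe, mob_coe, if_neg h2, OnePoint.coe_eq_coe]
      push_cast; norm_num
    · rw [mob_coe, if_neg hx]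
      by_cases h1 : ((-1:ℤ):ℝ) - 1/x = 0
      · have hx1 : x = -1 := by
          push_cast at h1; field_simp at h1; linarith
        have h2 : x + ((1:ℤ):ℝ) = 0 := by rw [hx1]; push_cast; ring
        rw [mob_coe, if_pos h1, addPt_coe, mob_coe, if_pos h2]
      · have hx1 : x ≠ -1 := by
          intro h; subst h; push_cast at h1; norm_num at h1
        have h2 : x + ((1:ℤ):ℝ) ≠ 0 := by push_cast; intro h; exact hx1 (by linarith)
        rw [mob_coe, if_neg h1, addPt_coe, mob_coe, if_neg h2, OnePoint.coe_eq_coe]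
        push_cast
        have h3 : x + 1 ≠ 0 := by intro h; exact hx1 (by linarith)
        have e : -1 - 1/x = -((x+1)/x) := by field_simp; ring
        rw [e, div_neg, one_div_div, sub_neg_eq_add]
        field_simp
        ring


lemma mob_injective (a : ℤ) : Function.Injective (mob a) := by
  intro z w h
  induction z using OnePoint.rec <;> induction w using OnePoint.rec <;>
    simp only [mob_infty, mob_coe] at h
  · rfl
  case infty.coe x =>
    split_ifs at h with h1
    · exact absurd h (OnePoint.coe_ne_infty _)
    · rw [OnePoint.coe_eq_coe] at h
      have h2 : (1:ℝ)/x = 0 := by linarith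
      exact absurd h2 (one_div_ne_zero h1)
  case coe.infty x =>
    split_ifs at h with h1
    · exact absurd h.symm (OnePoint.coe_ne_infty _)
    · rw [OnePoint.coe_eq_coe] at h
      have h2 : (1:ℝ)/x = 0 := by linarith
      exact absurd h2 (one_div_ne_zero h1)
  case coe.coe x y =>
    split_ifs at h with h1 h2 h2
    · rw [h1, h2]
    · exact absurd h.symm (OnePoint.coe_ne_infty _)
    · exact absurd h (OnePoint.coe_ne_infty _)
    · rw [OnePoint.coe_eq_coe] at h
      have h3 : (1:ℝ)/x = 1/y := by linarith
      rw [div_eq_div_iff h1 h2] at h3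
      rw [OnePoint.coe_eq_coe]; linarith

/-- Apply the first `n` maps `s_0, …, s_{n-1}` of the sequence `f` to `z`. -/
noncomputable def W (f : ℕ → ℤ) : ℕ → OnePoint ℝ → OnePoint ℝ
  | 0, z => z
  | n+1, z => W f n (mob (f n) z)

lemma W_succ (f : ℕ → ℤ) (n : ℕ) (z : OnePoint ℝ) :
    W f (n+1) z = W f n (mob (f n) z) := rfl

lemma W_congr {f g : ℕ → ℤ} (n : ℕ) (h : ∀ k, k < n → f k = g k) (z : OnePoint ℝ) :
    W f n z = W g n z := by
  induction n generalizing z with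
  | zero => rfl
  | succ n ih =>
    rw [W_succ, W_succ, h n (Nat.lt_succ_self n),
      ih (fun k hk => h k (hk.trans (Nat.lt_succ_self n)))]

lemma W_injective (f : ℕ → ℤ) (n : ℕ) : Function.Injective (W f n) := by
  induction n with
  | zero => exact fun a b h => h
  | succ n ih => exact fun a b h => mob_injective _ (ih h)

lemma cfVal_eq_foldr (L : List ℤ) : cfVal L = L.foldr mob ∞ := by
  induction L with
  | nil => rfl
  | cons a t ih => rw [cfVal, ih]; rfl

lemma cfConv_eq_W (f : ℕ → ℤ) (j : ℕ) : cfConv f j = W f (j+1) ∞ := by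
  have key : ∀ n z, ((List.range n).map f).foldr mob z = W f n z := by
    intro n
    induction n with
    | zero => intro z; rfl
    | succ n ih =>
      intro z
      rw [List.range_succ, List.map_append, List.foldr_append, W_succ]
      exact ih _
  rw [cfConv, cfVal_eq_foldr, key]

lemma Phi_of_not_bad {f : ℕ → ℤ} (h : ¬ ∃ m, badIdx f m) : Phi f = f := by
  rw [Phi, dif_neg h]

lemma pIdx_of_not_bad {f : ℕ → ℤ} (h : ¬ ∃ m, badIdx f m) : pIdx f = ⊤ := by
  rw [pIdx, dif_neg h]

lemma pIdx_of_bad {f : ℕ → ℤ} (h : ∃ m, badIdx f m) : pIdx f = (Nat.find h : ℕ∞) := by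
  rw [pIdx, dif_pos h]

lemma one_le_find {f : ℕ → ℤ} (h : ∃ m, badIdx f m) : 1 ≤ Nat.find h :=
  (Nat.find_spec h).1

lemma Phi_low {f : ℕ → ℤ} (h : ∃ m, badIdx f m) (k : ℕ) (hk : k + 1 < Nat.find h) :
    Phi f k = f k := by
  have h1 := one_le_find h
  simp only [Phi, dif_pos h, ite_apply]
  split_ifs <;> first | rfl | omega

lemma Phi_at_zero {f : ℕ → ℤ} (h : ∃ m, badIdx f m) (hf : f (Nat.find h) = 0) :
    Phi f (Nat.find h - 1) = f (Nat.find h - 1) + f (Nat.find h + 1) := by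
  have h1 := one_le_find h
  simp only [Phi, dif_pos h, ite_apply]
  split_ifs <;> first | rfl | omega

lemma Phi_high_zero {f : ℕ → ℤ} (h : ∃ m, badIdx f m) (hf : f (Nat.find h) = 0)
    (k : ℕ) (hk : Nat.find h ≤ k) : Phi f k = f (k + 2) := by
  have h1 := one_le_find h
  simp only [Phi, dif_pos h, ite_apply]
  split_ifs <;> first | rfl | omega

lemma Phi_at_one {f : ℕ → ℤ} (h : ∃ m, badIdx f m) (hf : f (Nat.find h) = 1) :
    Phi f (Nat.find h - 1) = f (Nat.find h - 1) - 1 := by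
  have h1 := one_le_find h
  simp only [Phi, dif_pos h, ite_apply]
  split_ifs <;> first | rfl | omega

lemma Phi_succ_one {f : ℕ → ℤ} (h : ∃ m, badIdx f m) (hf : f (Nat.find h) = 1) :
    Phi f (Nat.find h) = f (Nat.find h + 1) - 1 := by
  have h1 := one_le_find h
  simp only [Phi, dif_pos h, ite_apply]
  split_ifs <;> first | rfl | omega

lemma Phi_high_one {f : ℕ → ℤ} (h : ∃ m, badIdx f m) (hf : f (Nat.find h) = 1)
    (k : ℕ) (hk : Nat.find h + 1 ≤ k) : Phi f k = f (k + 1) := by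
  have h1 := one_le_find h
  simp only [Phi, dif_pos h, ite_apply]
  split_ifs <;> first | rfl | omega

lemma Phi_at_negone {f : ℕ → ℤ} (h : ∃ m, badIdx f m) (hf : f (Nat.find h) = -1) :
    Phi f (Nat.find h - 1) = f (Nat.find h - 1) + 1 := by
  have h1 := one_le_find h
  simp only [Phi, dif_pos h, ite_apply]
  split_ifs <;> first | rfl | omega

lemma Phi_succ_negone {f : ℕ → ℤ} (h : ∃ m, badIdx f m) (hf : f (Nat.find h) = -1) :
    Phi f (Nat.find h) = f (Nat.find h + 1) + 1 := by
  have h1 := one_le_find h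
  simp only [Phi, dif_pos h, ite_apply]
  split_ifs <;> first | rfl | omega

lemma Phi_high_negone {f : ℕ → ℤ} (h : ∃ m, badIdx f m) (hf : f (Nat.find h) = -1)
    (k : ℕ) (hk : Nat.find h + 1 ≤ k) : Phi f k = f (k + 1) := by
  have h1 := one_le_find h
  simp only [Phi, dif_pos h, ite_apply]
  split_ifs <;> first | rfl | omega

lemma phi_step (f : ℕ → ℤ) :
    ∃ g : ℕ → ℕ, StrictMono g ∧
      (∀ j, cfConv (Phi f) j = cfConv f (g j)) ∧
      (∀ (h : ∃ m, badIdx f m),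
        (∀ j, j + 2 ≤ Nat.find h → g j = j) ∧ (∀ j, Nat.find h ≤ j + 1 → j + 1 ≤ g j)) := by
  by_cases h : ∃ m, badIdx f m
  case neg =>
    refine ⟨id, strictMono_id, fun j => by rw [Phi_of_not_bad h]; rfl, fun h' => absurd h' h⟩
  case pos =>
    have h1 : 1 ≤ Nat.find h := one_le_find h
    set m := Nat.find h with hm
    have e1 : m - 1 + 1 = m := by omega
    rcases (Nat.find_spec h).2 with hf | hf | hf
    · -- b_m = 0 : remove two terms
      refine ⟨fun j => if j + 2 ≤ m then j else j + 2, ?_, ?_, ?_⟩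
      · apply strictMono_nat_of_lt_succ
        intro n
        split_ifs <;> omega
      · intro j
        beta_reduce
        by_cases hj : j + 2 ≤ m
        · rw [if_pos hj, cfConv_eq_W, cfConv_eq_W]
          exact W_congr (j+1) (fun k hk => Phi_low h k (by omega)) ∞
        · rw [if_neg hj]
          have key : ∀ d, ∀ z, W (Phi f) (m - 1 + d + 1) z = W f (m - 1 + d + 3) z := by
            intro d
            induction d with
            | zero =>
              intro z
              have lhs : W (Phi f) (m - 1 + 0 + 1) z
                  = W f (m - 1) (mob (f (m - 1) + f (m + 1)) z) := by
                rw [show m - 1 + 0 + 1 = (m - 1) + 1 from rfl, W_succ, Phi_at_zero h hf]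
                exact W_congr _ (fun k hk => Phi_low h k (by omega)) _
              have rhs : W f (m - 1 + 0 + 3)  z
                  = W f (m - 1) (mob (f (m - 1)) (mob (f (m - 1 + 1))
                      (mob (f (m - 1 + 1 + 1)) z))) := rfl
              rw [lhs, rhs, e1, hf, mob_mob_zero, addPt_mob, add_comm]
            | succ d ih =>
              intro z
              have lhs : W (Phi f) (m - 1 + (d + 1) + 1) z
                  = W (Phi f) (m - 1 + d + 1) (mob (Phi f (m - 1 + d + 1)) z) := rfl
              rw [lhs, ih, Phi_high_zero h hf _ (by omega)]
              have : m - 1 + d + 1 + 2 = m - 1 + d + 3 := by omega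
              rw [this]
              rfl
          obtain ⟨d, rfl⟩ : ∃ d, j = m - 1 + d := ⟨j - (m - 1), by omega⟩
          rw [cfConv_eq_W, cfConv_eq_W]
          have : m - 1 + d + 2 + 1 = m - 1 + d + 3 := by omega
          rw [this]
          exact key d ∞
      · intro h'
        have hfind : Nat.find h' = m := rfl
        constructor
        · intro j hj; beta_reduce; rw [hfind] at hj; rw [if_pos hj]
        · intro j hj; beta_reduce; rw [hfind] at hj; rw [if_neg (by omega)]; omega
    · -- b_m = 1
      refine ⟨fun j => if j + 2 ≤ m then j else j + 1, ?_, ?_, ?_⟩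
      · apply strictMono_nat_of_lt_succ
        intro n
        split_ifs <;> omega
      · intro j
        beta_reduce
        rcases lt_trichotomy (j + 2) (m + 1) with hj | hj | hj
        · rw [if_pos (by omega), cfConv_eq_W, cfConv_eq_W]
          exact W_congr (j+1) (fun k hk => Phi_low h k (by omega)) ∞
        · -- j = m - 1
          have hj1 : j = m - 1 := by omega
          subst hj1
          rw [if_neg (by omega), cfConv_eq_W, cfConv_eq_W]
          have lhs : W (Phi f) (m - 1 + 1) (∞ : OnePoint ℝ)
              = W f (m - 1) (mob (f (m - 1) - 1) ∞) := by
            rw [W_succ, Phi_at_one h hf]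
            exact W_congr _ (fun k hk => Phi_low h k (by omega)) _
          have rhs : W f (m - 1 + 1 + 1) (∞ : OnePoint ℝ)
              = W f (m - 1) (mob (f (m - 1)) (mob (f (m - 1 + 1)) ∞)) := rfl
          rw [lhs, rhs, e1, hf, mob_mob_one, addPt_infty]
        · -- j ≥ m
          rw [if_neg (by omega)]
          have key : ∀ d, ∀ z, W (Phi f) (m + d + 1) z = W f (m + d + 2) z := by
            intro d
            induction d with
            | zero =>
              intro z
              have lhs : W (Phi f) (m + 0 + 1) z
                  = W f (m - 1) (mob (f (m - 1) - 1) (mob (f (m + 1) - 1) z)) := by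
                have : m + 0 + 1 = (m - 1) + 1 + 1 := by omega
                rw [this, W_succ, W_succ, e1, Phi_at_one h hf, Phi_succ_one h hf]
                exact W_congr _ (fun k hk => Phi_low h k (by omega)) _
              have rhs : W f (m + 0 + 2) z
                  = W f (m - 1) (mob (f (m - 1)) (mob (f (m - 1 + 1))
                      (mob (f (m - 1 + 1 + 1)) z))) := by
                have : m + 0 + 2 = (m - 1) + 1 + 1 + 1 := by omega
                rw [this]; rfl
              rw [lhs, rhs, e1, hf, mob_mob_one, addPt_mob]
              have : f (m + 1) + -1 = f (m + 1) - 1 := by ring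
              rw [this]
            | succ d ih =>
              intro z
              have lhs : W (Phi f) (m + (d + 1) + 1) z
                  = W (Phi f) (m + d + 1) (mob (Phi f (m + d + 1)) z) := rfl
              rw [lhs, ih, Phi_high_one h hf _ (by omega)]
              have : m + d + 1 + 1 = m + d + 2 := by omega
              rw [this]
              rfl
          obtain ⟨d, rfl⟩ : ∃ d, j = m + d := ⟨j - m, by omega⟩
          rw [cfConv_eq_W, cfConv_eq_W]
          have : m + d + 1 + 1 = m + d + 2 := by omega
          rw [this]
          exact key d ∞
      · intro h'
        have hfind : Nat.find h' = m := rfl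
        constructor
        · intro j hj; beta_reduce; rw [hfind] at hj; rw [if_pos hj]
        · intro j hj; beta_reduce; rw [hfind] at hj; rw [if_neg (by omega)]
    · -- b_m = -1
      refine ⟨fun j => if j + 2 ≤ m then j else j + 1, ?_, ?_, ?_⟩
      · apply strictMono_nat_of_lt_succ
        intro n
        split_ifs <;> omega
      · intro j
        beta_reduce
        rcases lt_trichotomy (j + 2) (m + 1) with hj | hj | hj
        · rw [if_pos (by omega), cfConv_eq_W, cfConv_eq_W]
          exact W_congr (j+1) (fun k hk => Phi_low h k (by omega)) ∞
        · have hj1 : j = m - 1 := by omega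
          subst hj1
          rw [if_neg (by omega), cfConv_eq_W, cfConv_eq_W]
          have lhs : W (Phi f) (m - 1 + 1) (∞ : OnePoint ℝ)
              = W f (m - 1) (mob (f (m - 1) + 1) ∞) := by
            rw [W_succ, Phi_at_negone h hf]
            exact W_congr _ (fun k hk => Phi_low h k (by omega)) _
          have rhs : W f (m - 1 + 1 + 1) (∞ : OnePoint ℝ)
              = W f (m - 1) (mob (f (m - 1)) (mob (f (m - 1 + 1)) ∞)) := rfl
          rw [lhs, rhs, e1, hf, mob_mob_negone, addPt_infty]
        · rw [if_neg (by omega)]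
          have key : ∀ d, ∀ z, W (Phi f) (m + d + 1) z = W f (m + d + 2) z := by
            intro d
            induction d with
            | zero =>
              intro z
              have lhs : W (Phi f) (m + 0 + 1) z
                  = W f (m - 1) (mob (f (m - 1) + 1) (mob (f (m + 1) + 1) z)) := by
                have : m + 0 + 1 = (m - 1) + 1 + 1 := by omega
                rw [this, W_succ, W_succ, e1, Phi_at_negone h hf, Phi_succ_negone h hf]
                exact W_congr _ (fun k hk => Phi_low h k (by omega)) _
              have rhs : W f (m + 0 + 2) z
                  = W f (m - 1) (mob (f (m - 1)) (mob (f (m - 1 + 1))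
                      (mob (f (m - 1 + 1 + 1)) z))) := by
                have : m + 0 + 2 = (m - 1) + 1 + 1 + 1 := by omega
                rw [this]; rfl
              rw [lhs, rhs, e1, hf, mob_mob_negone, addPt_mob]
            | succ d ih =>
              intro z
              have lhs : W (Phi f) (m + (d + 1) + 1) z
                  = W (Phi f) (m + d + 1) (mob (Phi f (m + d + 1)) z) := rfl
              rw [lhs, ih, Phi_high_negone h hf _ (by omega)]
              have : m + d + 1 + 1 = m + d + 2 := by omega
              rw [this]
              rfl
          obtain ⟨d, rfl⟩ : ∃ d, j = m + d := ⟨j - m, by omega⟩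
          rw [cfConv_eq_W, cfConv_eq_W]
          have : m + d + 1 + 1 = m + d + 2 := by omega
          rw [this]
          exact key d ∞
      · intro h'
        have hfind : Nat.find h' = m := rfl
        constructor
        · intro j hj; beta_reduce; rw [hfind] at hj; rw [if_pos hj]
        · intro j hj; beta_reduce; rw [hfind] at hj; rw [if_neg (by omega)]

/-- A choice of index-shift map for one application of `Phi`. -/
noncomputable def Gmap (f : ℕ → ℤ) : ℕ → ℕ := Classical.choose (phi_step f)

lemma Gmap_strictMono (f : ℕ → ℤ) : StrictMono (Gmap f) :=
  (Classical.choose_spec (phi_step f)).1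

lemma Gmap_conv (f : ℕ → ℤ) (j : ℕ) : cfConv (Phi f) j = cfConv f (Gmap f j) :=
  (Classical.choose_spec (phi_step f)).2.1 j

lemma Gmap_big (f : ℕ → ℤ) (h : ∃ m, badIdx f m) (j : ℕ) (hj : Nat.find h ≤ j + 1) :
    j + 1 ≤ Gmap f j :=
  ((Classical.choose_spec (phi_step f)).2.2 h).2 j hj

/-- Composite index-shift map for `t` applications of `Phi`. -/
noncomputable def Rho (b : ℕ → ℤ) : ℕ → ℕ → ℕ
  | 0 => id
  | t+1 => Rho b t ∘ Gmap (Phi^[t] b)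

lemma Rho_succ (b : ℕ → ℤ) (t j : ℕ) :
    Rho b (t+1) j = Rho b t (Gmap (Phi^[t] b) j) := rfl

lemma Rho_strictMono (b : ℕ → ℤ) (t : ℕ) : StrictMono (Rho b t) := by
  induction t with
  | zero => exact strictMono_id
  | succ t ih => exact ih.comp (Gmap_strictMono _)

lemma cfConv_iterate (b : ℕ → ℤ) (t : ℕ) : ∀ j, cfConv (Phi^[t] b) j = cfConv b (Rho b t j) := by
  induction t with
  | zero => intro j; rfl
  | succ t ih =>
    intro j
    rw [Function.iterate_succ_apply', Gmap_conv, ih, Rho_succ]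

lemma enat_succ_le {a : ℕ} {x : ℕ∞} (h : (a : ℕ∞) < x) : ((a + 1 : ℕ) : ℕ∞) ≤ x := by
  induction x using ENat.recTopCoe with
  | top => exact le_top
  | coe n =>
    have : a < n := by exact_mod_cast h
    exact_mod_cast this

/-- **Theorem 1(ii)(b).** If `p⁽ⁿ⁾ ↛ ∞` and `q⁽ⁿ⁾ ↛ ∞`, then `[b₀, b₁, …]` diverges. -/
theorem stmt3 (b : ℕ → ℤ) (hp : ¬ PTendsToTop b)
    (hq : ¬ Filter.Tendsto (qSeq b) Filter.atTop Filter.atTop) :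
    ¬ ∃ L : OnePoint ℝ, Filter.Tendsto (cfConv b) Filter.atTop (nhds L) := by
  rintro ⟨L, hL⟩
  have hP1 : ∀ n : ℕ, 1 ≤ pIdx (Phi^[n] b) := by
    intro n
    by_cases hb : ∃ m, badIdx (Phi^[n] b) m
    · rw [pIdx_of_bad hb]
      exact_mod_cast one_le_find hb
    · rw [pIdx_of_not_bad hb]; exact le_top
  obtain ⟨N, hN⟩ : ∃ N : ℕ, ∀ M : ℕ, ∃ n ≥ M, pIdx (Phi^[n] b) ≤ (N : ℕ∞) := by
    rw [PTendsToTop] at hp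
    push_neg at hp
    obtain ⟨N, hN⟩ := hp
    refine ⟨N, fun M => ?_⟩
    obtain ⟨n, hn1, hn2⟩ := hN M
    exact ⟨n, hn1, hn2⟩
  have hliminf_le : Filter.liminf (fun n => pIdx (Phi^[n] b)) Filter.atTop ≤ (N : ℕ∞) :=
    Filter.liminf_le_of_frequently_le (Filter.frequently_atTop.mpr hN)
  have hliminf_ne : Filter.liminf (fun n => pIdx (Phi^[n] b)) Filter.atTop ≠ ⊤ := by
    intro hcon
    rw [hcon] at hliminf_le
    exact absurd (top_le_iff.mp hliminf_le) (by simp)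
  set p := pLim b with hp_def
  have hpcast : (p : ℕ∞) = Filter.liminf (fun n => pIdx (Phi^[n] b)) Filter.atTop := by
    rw [hp_def, pLim]
    exact ENat.coe_toNat hliminf_ne
  have hp1 : 1 ≤ p := by
    have h1 : (1 : ℕ∞) ≤ Filter.liminf (fun n => pIdx (Phi^[n] b)) Filter.atTop := by
      exact Filter.le_liminf_of_le (by isBoundedDefault) (Filter.Eventually.of_forall hP1)
    rw [← hpcast] at h1
    exact_mod_cast h1
  have hEv : ∀ᶠ n in Filter.atTop, (p : ℕ∞) ≤ pIdx (Phi^[n] b) := by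
    have hlt : ((p - 1 : ℕ) : ℕ∞) < Filter.liminf (fun n => pIdx (Phi^[n] b)) Filter.atTop := by
      rw [← hpcast]
      exact_mod_cast (by omega : p - 1 < p)
    filter_upwards [Filter.eventually_lt_of_lt_liminf hlt] with n hn
    have := enat_succ_le hn
    rwa [show p - 1 + 1 = p by omega] at this
  obtain ⟨N0, hN0⟩ := Filter.eventually_atTop.mp hEv
  have hFreqP : ∃ᶠ n in Filter.atTop, pIdx (Phi^[n] b) = (p : ℕ∞) := by
    by_contra hcon
    rw [Filter.not_frequently] at hcon
    have hev2 : ∀ᶠ n in Filter.atTop, ((p + 1 : ℕ) : ℕ∞) ≤ pIdx (Phi^[n] b) := by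
      filter_upwards [hcon, hEv] with n h1 h2
      exact enat_succ_le (lt_of_le_of_ne h2 (Ne.symm h1))
    have h3 := Filter.le_liminf_of_le (by isBoundedDefault) hev2
    rw [← hpcast] at h3
    have : p + 1 ≤ p := by exact_mod_cast h3
    omega
  -- singular times have a bad index exactly at p
  have hsing : ∀ n, pIdx (Phi^[n] b) = (p : ℕ∞) →
      ∃ h : ∃ m, badIdx (Phi^[n] b) m, Nat.find h = p := by
    intro n hn
    by_cases hb : ∃ m, badIdx (Phi^[n] b) m
    · refine ⟨hb, ?_⟩
      rw [pIdx_of_bad hb] at hn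
      exact_mod_cast hn
    · rw [pIdx_of_not_bad hb] at hn
      exact absurd hn.symm (by simp)
  -- coefficient stability below p-1
  have stab : ∀ n, N0 ≤ n → ∀ k, k + 1 < p → (Phi^[n] b) k = (Phi^[N0] b) k := by
    intro n hn
    induction n, hn using Nat.le_induction with
    | base => intro k _; rfl
    | succ n hn ih =>
      intro k hk
      rw [Function.iterate_succ_apply']
      by_cases hb : ∃ m, badIdx (Phi^[n] b) m
      · have hple : (p : ℕ∞) ≤ (Nat.find hb : ℕ∞) := by
          rw [← pIdx_of_bad hb]; exact hN0 n hn
        have : p ≤ Nat.find hb := by exact_mod_cast hple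
        rw [Phi_low hb k (by omega)]
        exact ih k hk
      · rw [Phi_of_not_bad hb]
        exact ih k hk
  -- the coefficient at p-1 is unchanged at non-singular times
  have cstep : ∀ n, N0 ≤ n → pIdx (Phi^[n] b) ≠ (p : ℕ∞) →
      (Phi^[n+1] b) (p - 1) = (Phi^[n] b) (p - 1) := by
    intro n hn hns
    rw [Function.iterate_succ_apply']
    by_cases hb : ∃ m, badIdx (Phi^[n] b) m
    · have hple : (p : ℕ∞) ≤ (Nat.find hb : ℕ∞) := by
        rw [← pIdx_of_bad hb]; exact hN0 n hn
      have h1 : p ≤ Nat.find hb := by exact_mod_cast hple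
      have h2 : Nat.find hb ≠ p := by
        intro hcon
        exact hns (by rw [pIdx_of_bad hb, hcon])
      exact Phi_low hb (p - 1) (by omega)
    · rw [Phi_of_not_bad hb]
  -- convergents at index p-1 and p, in terms of the frozen prefix
  have convm1 : ∀ n, N0 ≤ n → cfConv (Phi^[n] b) (p - 1)
      = W (Phi^[N0] b) (p - 1) (mob ((Phi^[n] b) (p - 1)) ∞) := by
    intro n hn
    rw [cfConv_eq_W, W_succ]
    exact W_congr _ (fun k hk => stab n hn k (by omega)) _
  have convp : ∀ n, N0 ≤ n → cfConv (Phi^[n] b) p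
      = W (Phi^[N0] b) (p - 1) (mob ((Phi^[n] b) (p - 1)) (mob ((Phi^[n] b) p) ∞)) := by
    intro n hn
    rw [cfConv_eq_W, show p + 1 = p - 1 + 1 + 1 by omega, W_succ, W_succ,
      show p - 1 + 1 = p by omega]
    exact W_congr _ (fun k hk => stab n hn k (by omega)) _
  -- the index-tracking sequence
  have rmono : Monotone (fun t => Rho b t (p - 1)) := by
    apply monotone_nat_of_le_succ
    intro t
    rw [Rho_succ]
    exact (Rho_strictMono b t).monotone (Gmap_strictMono _).le_apply
  have rstep : ∀ t, N0 ≤ t → pIdx (Phi^[t] b) = (p : ℕ∞) →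
      Rho b t (p - 1) < Rho b (t+1) (p - 1) := by
    intro t ht hs
    obtain ⟨hb, hfind⟩ := hsing t hs
    have hg : p - 1 + 1 ≤ Gmap (Phi^[t] b) (p - 1) :=
      Gmap_big _ hb (p - 1) (by omega)
    rw [Rho_succ]
    exact Rho_strictMono b t (by omega)
  have rtend : Filter.Tendsto (fun t => Rho b t (p - 1)) Filter.atTop Filter.atTop := by
    apply tendsto_atTop_atTop_of_monotone rmono
    intro K
    induction K with
    | zero => exact ⟨0, by omega⟩
    | succ K ih =>
      obtain ⟨t, ht⟩ := ih
      obtain ⟨t', ht'1, ht'2⟩ := Filter.frequently_atTop.mp hFreqP (max t N0)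
      refine ⟨t' + 1, ?_⟩
      have h1 := rstep t' (le_of_max_le_right ht'1) ht'2
      have h2 := rmono (le_of_max_le_left ht'1 : t ≤ t')
      simp only at h1 h2 ⊢
      omega
  have wlim : Filter.Tendsto (fun t => cfConv b (Rho b t (p - 1))) Filter.atTop (nhds L) :=
    hL.comp rtend
  have ulim : Filter.Tendsto (fun t => cfConv b (Rho b t p)) Filter.atTop (nhds L) := by
    refine hL.comp (Filter.tendsto_atTop_mono ?_ rtend)
    exact fun t => (Rho_strictMono b t).monotone (by omega)
  -- q does not tend to infinity
  obtain ⟨Q, hQ⟩ : ∃ Q : ℕ, ∀ M : ℕ, ∃ n ≥ M, ((Phi^[n] b) (p - 1)).natAbs ≤ Q := by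
    rw [Filter.tendsto_atTop_atTop] at hq
    push_neg at hq
    obtain ⟨K, hK⟩ := hq
    refine ⟨K, fun M => ?_⟩
    obtain ⟨n, hn1, hn2⟩ := hK M
    refine ⟨n, hn1, ?_⟩
    rw [qSeq, ← hp_def] at hn2
    omega
  -- frequently singular with bounded coefficient
  have hfreqSQ : ∃ᶠ t in Filter.atTop,
      (pIdx (Phi^[t] b) = (p : ℕ∞) ∧ ((Phi^[t] b) (p - 1)).natAbs ≤ Q) := by
    rw [Filter.frequently_atTop]
    intro M
    obtain ⟨n, hn1, hn2⟩ := hQ (max M N0)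
    have hex : ∃ s, n ≤ s ∧ pIdx (Phi^[s] b) = (p : ℕ∞) := by
      obtain ⟨t', ht'1, ht'2⟩ := Filter.frequently_atTop.mp hFreqP n
      exact ⟨t', ht'1, ht'2⟩
    classical
    have hs1 := (Nat.find_spec hex).1
    have hs2 := (Nat.find_spec hex).2
    have hc : ∀ u, n ≤ u → u ≤ Nat.find hex → (Phi^[u] b) (p - 1) = (Phi^[n] b) (p - 1) := by
      intro u hu
      induction u, hu using Nat.le_induction with
      | base => intro _; rfl
      | succ u hu ih =>
        intro hus
        have hu_lt : u < Nat.find hex := by omega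
        have hns : ¬ (pIdx (Phi^[u] b) = (p : ℕ∞)) := by
          intro hcon
          exact (Nat.find_min hex hu_lt) ⟨hu, hcon⟩
        rw [cstep u (le_trans (le_trans (le_max_right M N0) hn1) hu) hns]
        exact ih (by omega)
    refine ⟨Nat.find hex, by omega, hs2, ?_⟩
    rw [hc (Nat.find hex) hs1 le_rfl]
    exact hn2
  -- pigeonhole a fixed coefficient value
  obtain ⟨v, hv⟩ : ∃ v : ℤ, ∃ᶠ t in Filter.atTop,
      (pIdx (Phi^[t] b) = (p : ℕ∞) ∧ (Phi^[t] b) (p - 1) = v) := by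
    by_contra hcon
    push_neg at hcon
    have hev : ∀ᶠ t in Filter.atTop, ∀ v ∈ Finset.Icc (-(Q : ℤ)) (Q : ℤ),
        ¬(pIdx (Phi^[t] b) = (p : ℕ∞) ∧ (Phi^[t] b) (p - 1) = v) := by
      rw [Filter.eventually_all_finset]
      intro v _
      exact (hcon v).mono fun t ht h => ht h.1 h.2
    obtain ⟨t, ht1, ht2⟩ := (hfreqSQ.and_eventually hev).exists
    refine ht2 ((Phi^[t] b) (p - 1)) ?_ ⟨ht1.1, rfl⟩
    rw [Finset.mem_Icc]
    have := ht1.2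
    omega
  -- the limit equals S(v)
  have hw : ∃ᶠ t in Filter.atTop,
      cfConv b (Rho b t (p - 1)) = W (Phi^[N0] b) (p - 1) (mob v ∞) := by
    refine (hv.and_eventually (Filter.eventually_ge_atTop N0)).mono ?_
    rintro t ⟨⟨hs, hcv⟩, htn⟩
    rw [← cfConv_iterate b t (p - 1), convm1 t htn, hcv]
  have hLv : L = W (Phi^[N0] b) (p - 1) (mob v ∞) :=
    tendsto_nhds_unique_of_frequently_eq wlim tendsto_const_nhds hw
  -- values of the convergent at index p at singular times
  have hu : ∃ᶠ t in Filter.atTop,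
      (cfConv b (Rho b t p) = W (Phi^[N0] b) (p - 1) ∞ ∨
       cfConv b (Rho b t p) = W (Phi^[N0] b) (p - 1) (mob (v - 1) ∞) ∨
       cfConv b (Rho b t p) = W (Phi^[N0] b) (p - 1) (mob (v + 1) ∞)) := by
    refine (hv.and_eventually (Filter.eventually_ge_atTop N0)).mono ?_
    rintro t ⟨⟨hs, hcv⟩, htn⟩
    obtain ⟨hb, hfind⟩ := hsing t hs
    rw [← cfConv_iterate b t p, convp t htn, hcv]
    rcases (Nat.find_spec hb).2 with h0 | h1 | hm1
    · left
      rw [hfind] at h0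
      rw [h0, mob_infty, Int.cast_zero, mob_coe, if_pos rfl]
    · right; left
      rw [hfind] at h1
      rw [h1, mob_mob_one, addPt_infty]
    · right; right
      rw [hfind] at hm1
      rw [hm1, mob_mob_negone, addPt_infty]
  have key : ∀ x : OnePoint ℝ,
      (∃ᶠ t in Filter.atTop, cfConv b (Rho b t p) = W (Phi^[N0] b) (p - 1) x) →
      mob v ∞ = x := by
    intro x hx
    have h2 : L = W (Phi^[N0] b) (p - 1) x :=
      tendsto_nhds_unique_of_frequently_eq ulim tendsto_const_nhds hx
    exact W_injective _ _ (by rw [← hLv, h2])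
  rcases (Filter.frequently_or_distrib.mp hu) with h | h
  · have := key _ h
    rw [mob_infty] at this
    exact OnePoint.coe_ne_infty _ this
  rcases Filter.frequently_or_distrib.mp h with h | h
  · have := key _ h
    rw [mob_infty, mob_infty, OnePoint.coe_eq_coe] at this
    have : v = v - 1 := by exact_mod_cast this
    omega
  · have := key _ h
    rw [mob_infty, mob_infty, OnePoint.coe_eq_coe] at this
    have : v = v + 1 := by exact_mod_cast this
    omega
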